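/- Let E be a Polish space with its Borel σ-algebra, (μ_n) and μ Borel probability measures on E with μ_n converging weakly to μ, and ℓ : E → ℝ continuous, bounded, nonnegative with ∫ ℓ dμ > 0 and ∫ ℓ dμ_n > 0 for every n. Let h : E → ℝ be continuous, integrable with respect to each μ_n and with respect to μ, and such that ∫ |h| dμ_n → ∫ |h| dμ < ∞. Then ∫ h dν_n → ∫ h dν, where ν_n = (∫ ℓ dμ_n)⁻¹ • (μ_n.withDensity ℓ) and ν = (∫ ℓ dμ)⁻¹ • (μ.withDensity ℓ) are the induced posteriors. -/

import Mathlib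

open MeasureTheory Filter Topology
open scoped ENNReal NNReal

/-- Auxiliary: under weak convergence together with convergence of `∫ |h|`,
the integrals of `ℓ * h` converge, for `ℓ` bounded continuous nonnegative and
`h` continuous integrable. -/
theorem aux_tendsto_mul
    {E : Type*} [TopologicalSpace E]
    [MeasurableSpace E] [BorelSpace E]
    (μ : ℕ → Measure E) (μlim : Measure E)
    [∀ n, IsProbabilityMeasure (μ n)] [IsProbabilityMeasure μlim]
    (hweak : ∀ g : BoundedContinuousFunction E ℝ,
      Tendsto (fun n => ∫ x, g x ∂(μ n)) atTop (𝓝 (∫ x, g x ∂μlim)))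
    (ℓ : E → ℝ) (hℓc : Continuous ℓ) (hℓ0 : ∀ x, 0 ≤ ℓ x)
    (hℓb : ∃ B : ℝ, ∀ x, ℓ x ≤ B)
    (h : E → ℝ) (hhc : Continuous h)
    (hhint : ∀ n, Integrable h (μ n)) (hhintlim : Integrable h μlim)
    (hhabs : Tendsto (fun n => ∫ x, |h x| ∂(μ n)) atTop (𝓝 (∫ x, |h x| ∂μlim))) :
    Tendsto (fun n => ∫ x, ℓ x * h x ∂(μ n)) atTop (𝓝 (∫ x, ℓ x * h x ∂μlim)) := by
  obtain ⟨B, hB⟩ := hℓb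
  set B' : ℝ := max B 1 with hB'def
  have hB'pos : (0:ℝ) < B' := lt_of_lt_of_le one_pos (le_max_right _ _)
  have hℓB' : ∀ x, ℓ x ≤ B' := fun x => le_trans (hB x) (le_max_left _ _)
  have hℓnorm : ∀ x, ‖ℓ x‖ ≤ B' := fun x => by
    rw [Real.norm_eq_abs, abs_of_nonneg (hℓ0 x)]; exact hℓB' x
  -- integrability of ℓ * h
  have hint_lh : ∀ (m : Measure E), Integrable h m → Integrable (fun x => ℓ x * h x) m :=
    fun m hm => hm.bdd_mul hℓc.aestronglyMeasurable (Filter.Eventually.of_forall hℓnorm)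
  -- integrability of truncations min |h| M
  have hint_min : ∀ (m : Measure E), Integrable h m → ∀ M : ℝ, 0 ≤ M →
      Integrable (fun x => min |h x| M) m := by
    intro m hm M hMnn
    refine hm.abs.mono' ((hhc.abs.min continuous_const).aestronglyMeasurable) ?_
    filter_upwards with x
    rw [Real.norm_eq_abs, abs_le]
    exact ⟨le_trans (neg_nonpos.mpr (abs_nonneg _)) (le_min (abs_nonneg _) hMnn),
      min_le_left _ _⟩
  -- monotone convergence of truncations under μlim
  have hmono : Tendsto (fun M : ℕ => ∫ x, min |h x| (M:ℝ) ∂μlim) atTop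
      (𝓝 (∫ x, |h x| ∂μlim)) := by
    refine integral_tendsto_of_tendsto_of_monotone
      (fun M => hint_min μlim hhintlim (M:ℝ) (Nat.cast_nonneg _)) hhintlim.abs ?_ ?_
    · filter_upwards with x a b hab
      exact min_le_min le_rfl (Nat.cast_le.mpr hab)
    · filter_upwards with x
      refine tendsto_atTop_of_eventually_const (i₀ := ⌈|h x|⌉₊) (fun M hM => ?_)
      exact min_eq_left (le_trans (Nat.le_ceil _) (Nat.cast_le.mpr hM))
  -- ε-argument
  rw [Metric.tendsto_atTop]
  intro ε hε
  have hε8 : (0:ℝ) < ε / (8 * B') := by positivity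
  -- pick a truncation level M
  have hmc : Tendsto (fun M : ℕ => (∫ x, |h x| ∂μlim) - ∫ x, min |h x| (M:ℝ) ∂μlim)
      atTop (𝓝 0) := by
    have h0 := Tendsto.sub
      (tendsto_const_nhds (x := ∫ x, |h x| ∂μlim) (f := (atTop : Filter ℕ))) hmono
    simpa using h0
  obtain ⟨M, hD⟩ := (hmc.eventually_lt_const hε8).exists
  set hMf : E → ℝ := fun x => max (-(M:ℝ)) (min (h x) (M:ℝ)) with hMfdef
  have hM0 : (0:ℝ) ≤ (M:ℝ) := Nat.cast_nonneg _
  -- key pointwise identity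
  have key : ∀ x, |h x - hMf x| = |h x| - min |h x| (M:ℝ) := by
    intro x
    simp only [hMfdef]
    rcases lt_or_ge (M:ℝ) (h x) with h1 | h1
    · have hmax : max (-(M:ℝ)) (min (h x) (M:ℝ)) = (M:ℝ) := by
        rw [min_eq_right h1.le, max_eq_right (neg_le_self hM0)]
      rw [hmax, abs_of_nonneg (by linarith : (0:ℝ) ≤ h x - M),
        abs_of_nonneg (by linarith : (0:ℝ) ≤ h x), min_eq_right h1.le]
    · rcases lt_or_ge (h x) (-(M:ℝ)) with h2 | h2
      · have hmax : max (-(M:ℝ)) (min (h x) (M:ℝ)) = -(M:ℝ) := by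
          rw [min_eq_left h1, max_eq_left h2.le]
        rw [hmax, abs_of_nonpos (by linarith : h x - -(M:ℝ) ≤ 0),
          abs_of_nonpos (by linarith : h x ≤ 0),
          min_eq_right (by linarith : (M:ℝ) ≤ -h x)]
        ring
      · have hxM : |h x| ≤ (M:ℝ) := abs_le.mpr ⟨h2, h1⟩
        have hmax : max (-(M:ℝ)) (min (h x) (M:ℝ)) = h x := by
          rw [min_eq_left h1, max_eq_right h2]
        rw [hmax, sub_self, abs_zero, min_eq_left hxM, sub_self]
  have hMc : Continuous hMf := continuous_const.max (hhc.min continuous_const)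
  have hMabs : ∀ x, |hMf x| ≤ (M:ℝ) := by
    intro x
    rw [abs_le]
    exact ⟨neg_le_neg_iff.mpr le_rfl |>.trans (le_max_left _ _),
      max_le (by linarith) (min_le_right _ _)⟩
  -- bounded continuous functions
  set gM : BoundedContinuousFunction E ℝ :=
    BoundedContinuousFunction.ofNormedAddCommGroup (fun x => ℓ x * hMf x)
      (hℓc.mul hMc) (B' * M) (fun x => by
        rw [Real.norm_eq_abs, abs_mul, abs_of_nonneg (hℓ0 x)]
        exact mul_le_mul (hℓB' x) (hMabs x) (abs_nonneg _) hB'pos.le) with hgMdef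
  set fMb : BoundedContinuousFunction E ℝ :=
    BoundedContinuousFunction.ofNormedAddCommGroup (fun x => min |h x| (M:ℝ))
      (hhc.abs.min continuous_const) (M:ℝ) (fun x => by
        rw [Real.norm_eq_abs, abs_of_nonneg (le_min (abs_nonneg _) hM0)]
        exact min_le_right _ _) with hfMbdef
  have gM_coe : ∀ x, gM x = ℓ x * hMf x := fun x => rfl
  have fMb_coe : ∀ x, fMb x = min |h x| (M:ℝ) := fun x => rfl
  -- key estimate, for any probability measure
  have est : ∀ (m : Measure E) [IsProbabilityMeasure m], Integrable h m →
      |(∫ x, ℓ x * h x ∂m) - ∫ x, gM x ∂m| ≤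
        B' * ((∫ x, |h x| ∂m) - ∫ x, fMb x ∂m) := by
    intro m _ hm
    have h1 : Integrable (fun x => ℓ x * h x) m := hint_lh m hm
    have h2 : Integrable (fun x => gM x) m := gM.integrable m
    have h3 : Integrable (fun x => fMb x) m := fMb.integrable m
    rw [← integral_sub h1 h2]
    calc |∫ x, (ℓ x * h x - gM x) ∂m|
        ≤ ∫ x, |ℓ x * h x - gM x| ∂m := by
          rw [← Real.norm_eq_abs]
          refine (norm_integral_le_integral_norm _).trans ?_
          simp [Real.norm_eq_abs]
      _ ≤ ∫ x, B' * (|h x| - fMb x) ∂m := by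
          refine integral_mono (h1.sub h2).abs (((hm.abs.sub h3).const_mul B')) ?_
          intro x
          simp only [Pi.abs_apply, Pi.sub_apply, gM_coe, fMb_coe, ← mul_sub, abs_mul,
            abs_of_nonneg (hℓ0 x), key x]
          refine mul_le_mul_of_nonneg_right (hℓB' x) ?_
          rw [← key x]; exact abs_nonneg _
      _ = B' * ((∫ x, |h x| ∂m) - ∫ x, fMb x ∂m) := by
          rw [integral_const_mul, integral_sub hm.abs h3]
  have hDfMb : (∫ x, |h x| ∂μlim) - ∫ x, fMb x ∂μlim < ε / (8 * B') := by
    simpa only [fMb_coe] using hD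
  -- eventually statements
  have hε4 : (0:ℝ) < ε / (4 * B') := by positivity
  have hlt : (∫ x, |h x| ∂μlim) - ∫ x, fMb x ∂μlim < ε / (4 * B') := by
    refine hDfMb.trans (div_lt_div_of_pos_left hε (by linarith) (by linarith))
  have E1 : ∀ᶠ n in atTop,
      (∫ x, |h x| ∂(μ n)) - ∫ x, fMb x ∂(μ n) < ε / (4 * B') :=
    (hhabs.sub (hweak fMb)).eventually_lt_const hlt
  have E2 : ∀ᶠ n in atTop,
      dist (∫ x, gM x ∂(μ n)) (∫ x, gM x ∂μlim) < ε / 4 :=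
    Metric.tendsto_nhds.mp (hweak gM) (ε / 4) (by positivity)
  rw [← eventually_atTop]
  filter_upwards [E1, E2] with n h1 h2
  have t1 : |(∫ x, ℓ x * h x ∂(μ n)) - ∫ x, gM x ∂(μ n)| < ε / 4 := by
    have := est (μ n) (hhint n)
    have hlt1 : B' * ((∫ x, |h x| ∂(μ n)) - ∫ x, fMb x ∂(μ n)) < B' * (ε / (4 * B')) :=
      mul_lt_mul_of_pos_left h1 hB'pos
    have hB'ne : B' ≠ 0 := ne_of_gt hB'pos
    have heq : B' * (ε / (4 * B')) = ε / 4 := by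
      field_simp
    linarith
  have t3 : |(∫ x, ℓ x * h x ∂μlim) - ∫ x, gM x ∂μlim| < ε / 8 := by
    have := est μlim hhintlim
    have hlt3 : B' * ((∫ x, |h x| ∂μlim) - ∫ x, fMb x ∂μlim) < B' * (ε / (8 * B')) :=
      mul_lt_mul_of_pos_left hDfMb hB'pos
    have hB'ne : B' ≠ 0 := ne_of_gt hB'pos
    have heq : B' * (ε / (8 * B')) = ε / 8 := by
      field_simp
    linarith
  rw [Real.dist_eq] at h2 ⊢
  calc |(∫ x, ℓ x * h x ∂(μ n)) - ∫ x, ℓ x * h x ∂μlim|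
      ≤ |(∫ x, ℓ x * h x ∂(μ n)) - ∫ x, gM x ∂(μ n)|
        + |(∫ x, gM x ∂(μ n)) - ∫ x, ℓ x * h x ∂μlim| := abs_sub_le _ _ _
    _ ≤ |(∫ x, ℓ x * h x ∂(μ n)) - ∫ x, gM x ∂(μ n)|
        + (|(∫ x, gM x ∂(μ n)) - ∫ x, gM x ∂μlim|
          + |(∫ x, gM x ∂μlim) - ∫ x, ℓ x * h x ∂μlim|) := by
          have := abs_sub_le (∫ x, gM x ∂(μ n)) (∫ x, gM x ∂μlim) (∫ x, ℓ x * h x ∂μlim)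
          linarith
    _ < ε := by
          rw [abs_sub_comm (∫ x, gM x ∂μlim)] at *
          linarith

/-- **Corollary 3**: convergence of posterior expectations of a possibly unbounded
continuous function `h`, given convergence of the prior expectations of `|h|`. -/
theorem posterior_integral_convergence
    {E : Type*} [TopologicalSpace E] [PolishSpace E]
    [MeasurableSpace E] [BorelSpace E]
    (μ : ℕ → Measure E) (μlim : Measure E)
    [∀ n, IsProbabilityMeasure (μ n)] [IsProbabilityMeasure μlim]
    (hweak : ∀ g : BoundedContinuousFunction E ℝ,
      Tendsto (fun n => ∫ x, g x ∂(μ n)) atTop (𝓝 (∫ x, g x ∂μlim)))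
    (ℓ : E → ℝ) (hℓc : Continuous ℓ) (hℓ0 : ∀ x, 0 ≤ ℓ x)
    (hℓb : ∃ B : ℝ, ∀ x, ℓ x ≤ B)
    (hZ : 0 < ∫ x, ℓ x ∂μlim) (hZn : ∀ n, 0 < ∫ x, ℓ x ∂(μ n))
    (h : E → ℝ) (hhc : Continuous h)
    (hhint : ∀ n, Integrable h (μ n)) (hhintlim : Integrable h μlim)
    (hhabs : Tendsto (fun n => ∫ x, |h x| ∂(μ n)) atTop (𝓝 (∫ x, |h x| ∂μlim)))
    (ν : ℕ → Measure E) (νlim : Measure E)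
    (hν : ∀ n, ν n = (ENNReal.ofReal (∫ x, ℓ x ∂(μ n)))⁻¹ •
      ((μ n).withDensity fun x => ENNReal.ofReal (ℓ x)))
    (hνlim : νlim = (ENNReal.ofReal (∫ x, ℓ x ∂μlim))⁻¹ •
      (μlim.withDensity fun x => ENNReal.ofReal (ℓ x))) :
    Tendsto (fun n => ∫ x, h x ∂(ν n)) atTop (𝓝 (∫ x, h x ∂νlim)) := by
  obtain ⟨B, hB⟩ := hℓb
  have hB' : ∀ x, ℓ x ≤ max B 1 := fun x => (hB x).trans (le_max_left _ _)
  -- rewrite the posterior integral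
  have hrw : ∀ (m : Measure E), 0 < (∫ x, ℓ x ∂m) →
      (∫ x, h x ∂((ENNReal.ofReal (∫ x, ℓ x ∂m))⁻¹ •
        (m.withDensity fun x => ENNReal.ofReal (ℓ x))))
      = (∫ x, ℓ x ∂m)⁻¹ * ∫ x, ℓ x * h x ∂m := by
    intro m hm0
    rw [integral_smul_measure]
    have hfmeas : Measurable (fun x => Real.toNNReal (ℓ x)) :=
      measurable_real_toNNReal.comp hℓc.measurable
    have hwd : (fun x => ENNReal.ofReal (ℓ x))
        = fun x => (((fun x => Real.toNNReal (ℓ x)) x : ℝ≥0) : ℝ≥0∞) := rfl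
    rw [hwd, integral_withDensity_eq_integral_smul hfmeas h]
    rw [ENNReal.toReal_inv, ENNReal.toReal_ofReal hm0.le]
    rw [smul_eq_mul]
    congr 1
    refine integral_congr_ae (Filter.Eventually.of_forall fun x => ?_)
    simp [NNReal.smul_def, Real.coe_toNNReal _ (hℓ0 x)]
  have h1 : ∀ n, ∫ x, h x ∂(ν n) = (∫ x, ℓ x ∂(μ n))⁻¹ * ∫ x, ℓ x * h x ∂(μ n) := by
    intro n; rw [hν n]; exact hrw (μ n) (hZn n)
  have h2 : ∫ x, h x ∂νlim = (∫ x, ℓ x ∂μlim)⁻¹ * ∫ x, ℓ x * h x ∂μlim := by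
    rw [hνlim]; exact hrw μlim hZ
  simp only [h1, h2]
  -- convergence of normalizing constants
  set ℓb : BoundedContinuousFunction E ℝ :=
    BoundedContinuousFunction.ofNormedAddCommGroup ℓ hℓc (max B 1) (fun x => by
      rw [Real.norm_eq_abs, abs_of_nonneg (hℓ0 x)]; exact hB' x) with hℓbdef
  have hZconv : Tendsto (fun n => ∫ x, ℓ x ∂(μ n)) atTop (𝓝 (∫ x, ℓ x ∂μlim)) := hweak ℓb
  have hZinv : Tendsto (fun n => (∫ x, ℓ x ∂(μ n))⁻¹) atTop (𝓝 ((∫ x, ℓ x ∂μlim)⁻¹)) :=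
    hZconv.inv₀ (ne_of_gt hZ)
  exact hZinv.mul (aux_tendsto_mul μ μlim hweak ℓ hℓc hℓ0 ⟨B, hB⟩ h hhc hhint hhintlim hhabs)
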